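/- arXiv:2510.10714 — 2 statements merged into one kernel-verified Lean document; each statement's English description precedes it below -/
import Mathlib

section
/- If T ≥ (n + ln 2 + ln(1/δ)) / (2ε²) and Φ' consists of T constraints sampled i.i.d. uniformly from an instance Φ on n variables, then with probability at least 1 − δ, simultaneously for all assignments x ∈ {0,1}^n we have |val_{Φ'}(x) − val_Φ(x)| ≤ ε; consequently |maxval(Φ') − maxval(Φ)| ≤ ε with probability at least 1 − δ. -/
attribute [local instance] Classical.propDecidable

open Real in
/-- Hoeffding's lemma for Bernoulli: mgf bound. -/
lemma bernoulli_mgf (p s : ℝ) (hp0 : 0 ≤ p) (hp1 : p ≤ 1) :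
    (1 - p + p * Real.exp s) * Real.exp (-(s * p)) ≤ Real.exp (s ^ 2 / 8) := by
  have hD : ∀ u : ℝ, 0 < 1 - p + p * Real.exp u := by
    intro u
    rcases eq_or_lt_of_le hp1 with h | h
    · simp [← h]; positivity
    · have := Real.exp_pos u; nlinarith
  set f : ℝ → ℝ := fun u => u ^ 2 / 8 + u * p - Real.log (1 - p + p * Real.exp u) with hf
  set g : ℝ → ℝ := fun u => u / 4 + p - p * Real.exp u / (1 - p + p * Real.exp u) with hg
  have hDf : ∀ u, HasDerivAt (fun v => 1 - p + p * Real.exp v) (p * Real.exp u) u := by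
    intro u
    simpa using ((Real.hasDerivAt_exp u).const_mul p).const_add (1 - p)
  have hfd : ∀ u, HasDerivAt f (g u) u := by
    intro u
    have h1 : HasDerivAt (fun v : ℝ => v ^ 2 / 8 + v * p) (u / 4 + p) u := by
      have := ((hasDerivAt_pow 2 u).div_const 8).add ((hasDerivAt_id u).mul_const p)
      exact this.congr_deriv (by ring)
    have h2 : HasDerivAt (fun v => Real.log (1 - p + p * Real.exp v))
        (p * Real.exp u / (1 - p + p * Real.exp u)) u :=
      (hDf u).log (hD u).ne'
    exact h1.sub h2
  have hgd : ∀ u, HasDerivAt g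
      (1 / 4 - (1 - p) * (p * Real.exp u) / (1 - p + p * Real.exp u) ^ 2) u := by
    intro u
    have h1 : HasDerivAt (fun v : ℝ => v / 4 + p) (1 / 4) u := by
      simpa using ((hasDerivAt_id u).div_const 4).add_const p
    have h2 : HasDerivAt (fun v => p * Real.exp v / (1 - p + p * Real.exp v))
        ((p * Real.exp u * (1 - p + p * Real.exp u) - p * Real.exp u * (p * Real.exp u)) /
          (1 - p + p * Real.exp u) ^ 2) u :=
      ((Real.hasDerivAt_exp u).const_mul p).div (hDf u) (hD u).ne'
    have := h1.sub h2
    exact this.congr_deriv (by ring)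
  have hg0 : ∀ u, 0 ≤ 1 / 4 - (1 - p) * (p * Real.exp u) / (1 - p + p * Real.exp u) ^ 2 := by
    intro u
    set q : ℝ := p * Real.exp u / (1 - p + p * Real.exp u) with hq
    have hD' := hD u
    have key : (1 - p) * (p * Real.exp u) / (1 - p + p * Real.exp u) ^ 2 = q * (1 - q) := by
      rw [hq]; field_simp
      ring
    rw [key]
    nlinarith [sq_nonneg (1 - 2 * q)]
  have hgmono : Monotone g :=
    monotone_of_deriv_nonneg (fun u => (hgd u).differentiableAt)
      (fun u => by rw [(hgd u).deriv]; exact hg0 u)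
  have hgzero : g 0 = 0 := by simp [hg]
  have hf0 : f 0 = 0 := by simp [hf]
  have key : f 0 ≤ f s := by
    rcases le_total 0 s with h | h
    · have : MonotoneOn f (Set.Ici 0) := by
        apply monotoneOn_of_deriv_nonneg (convex_Ici 0)
          (fun u hu => (hfd u).differentiableAt.continuousAt.continuousWithinAt)
        · intro u hu; exact (hfd u).differentiableAt.differentiableWithinAt
        · intro u hu
          rw [(hfd u).deriv]
          have : (0:ℝ) ≤ u := le_of_lt (by simpa using hu)
          calc (0:ℝ) = g 0 := hgzero.symm
          _ ≤ g u := hgmono this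
      exact this Set.self_mem_Ici h h
    · have : AntitoneOn f (Set.Iic 0) := by
        apply antitoneOn_of_deriv_nonpos (convex_Iic 0)
          (fun u hu => (hfd u).differentiableAt.continuousAt.continuousWithinAt)
        · intro u hu; exact (hfd u).differentiableAt.differentiableWithinAt
        · intro u hu
          rw [(hfd u).deriv]
          have : u ≤ (0:ℝ) := le_of_lt (by simpa using hu)
          calc g u ≤ g 0 := hgmono this
          _ = 0 := hgzero
      exact this h Set.self_mem_Iic h
  rw [hf0] at key
  have : Real.log (1 - p + p * Real.exp s) ≤ s ^ 2 / 8 + s * p := by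
    simp only [hf] at key; linarith
  have := Real.exp_le_exp.2 this
  rw [Real.exp_log (hD s)] at this
  calc (1 - p + p * Real.exp s) * Real.exp (-(s * p))
      ≤ Real.exp (s ^ 2 / 8 + s * p) * Real.exp (-(s * p)) := by
        apply mul_le_mul_of_nonneg_right this (Real.exp_pos _).le
    _ = Real.exp (s ^ 2 / 8) := by rw [← Real.exp_add]; ring_nf

open Finset in
lemma chernoff_sum_exp (m T : ℕ) (hm : 0 < m) (c : Fin m → Bool) (s : ℝ) :
    ∑ σ : Fin T → Fin m, Real.exp (s * ((∑ i : Fin T, (if c (σ i) then (1:ℝ) else 0))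
        - T * (((univ.filter (fun j => c j = true)).card : ℝ) / m)))
      ≤ (m : ℝ) ^ T * Real.exp (T * (s ^ 2 / 8)) := by
  set p : ℝ := ((univ.filter (fun j => c j = true)).card : ℝ) / m with hp
  have hmR : (0:ℝ) < m := by exact_mod_cast hm
  have hp0 : 0 ≤ p := by positivity
  have hp1 : p ≤ 1 := by
    rw [hp, div_le_one hmR]
    exact_mod_cast (card_filter_le univ _).trans_eq (by simp)
  have hsum : ∑ j : Fin m, Real.exp (s * ((if c j then (1:ℝ) else 0) - p))
      = (m : ℝ) * ((1 - p + p * Real.exp s) * Real.exp (-(s * p))) := by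
    rw [← Finset.sum_filter_add_sum_filter_not univ (fun j => c j = true)]
    have h1 : ∀ j ∈ univ.filter (fun j : Fin m => c j = true),
        Real.exp (s * ((if c j then (1:ℝ) else 0) - p)) = Real.exp (s * (1 - p)) := by
      intro j hj; simp at hj; simp [hj]
    have h2 : ∀ j ∈ univ.filter (fun j : Fin m => ¬ c j = true),
        Real.exp (s * ((if c j then (1:ℝ) else 0) - p)) = Real.exp (-(s * p)) := by
      intro j hj; simp at hj; simp [hj]
    rw [Finset.sum_congr rfl h1, Finset.sum_congr rfl h2, Finset.sum_const, Finset.sum_const]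
    have hcard : ((univ.filter (fun j : Fin m => ¬ c j = true)).card : ℝ)
        = m - (univ.filter (fun j : Fin m => c j = true)).card := by
      have h := Finset.card_filter_add_card_filter_not (s := univ)
        (p := fun j : Fin m => c j = true)
      have : ((univ.filter (fun j : Fin m => c j = true)).card : ℝ)
          + (univ.filter (fun j : Fin m => ¬ c j = true)).card = m := by
        exact_mod_cast (by simpa using h)
      linarith
    rw [nsmul_eq_mul, nsmul_eq_mul, hcard]
    have hk : ((univ.filter (fun j : Fin m => c j = true)).card : ℝ) = m * p := by
      rw [hp]; field_simp
    rw [hk, show s * (1 - p) = s + -(s * p) by ring, Real.exp_add]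
    ring
  calc ∑ σ : Fin T → Fin m, Real.exp (s * ((∑ i : Fin T, (if c (σ i) then (1:ℝ) else 0)) - T * p))
      = ∑ σ : Fin T → Fin m, ∏ i : Fin T, Real.exp (s * ((if c (σ i) then (1:ℝ) else 0) - p)) := by
        refine Finset.sum_congr rfl fun σ _ => ?_
        rw [← Real.exp_sum]
        congr 1
        rw [eq_comm]
        simp only [mul_sub]
        rw [Finset.sum_sub_distrib, ← Finset.mul_sum, Finset.sum_const, Finset.card_univ,
          Fintype.card_fin, nsmul_eq_mul]
        ring
    _ = (∑ j : Fin m, Real.exp (s * ((if c j then (1:ℝ) else 0) - p))) ^ T := by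
        rw [← Fin.prod_const T (∑ j : Fin m, Real.exp (s * ((if c j then (1:ℝ) else 0) - p))),
          Finset.prod_univ_sum]
        rw [Fintype.piFinset_univ]
    _ ≤ ((m : ℝ) * Real.exp (s ^ 2 / 8)) ^ T := by
        apply pow_le_pow_left₀ (by positivity)
        rw [hsum]
        exact mul_le_mul_of_nonneg_left (bernoulli_mgf p s hp0 hp1) hmR.le
    _ = (m : ℝ) ^ T * Real.exp (T * (s ^ 2 / 8)) := by
        rw [mul_pow, ← Real.exp_nat_mul]

attribute [local instance] Classical.propDecidable

open Finset in
lemma chernoff_tail (m T : ℕ) (hm : 0 < m) (c : Fin m → Bool) (ε s : ℝ)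
    (hs : s ^ 2 = 16 * ε ^ 2)
    (E : (Fin T → Fin m) → Prop)
    (hE : ∀ σ, E σ → 4 * ((T : ℝ) * ε ^ 2) ≤
      s * ((∑ i : Fin T, (if c (σ i) then (1:ℝ) else 0))
        - T * (((univ.filter (fun j => c j = true)).card : ℝ) / m))) :
    ((univ.filter E).card : ℝ) ≤ (m : ℝ) ^ T * Real.exp (-(2 * T * ε ^ 2)) := by
  set p : ℝ := ((univ.filter (fun j => c j = true)).card : ℝ) / m with hp
  have step1 : ((univ.filter E).card : ℝ) * Real.exp (4 * ((T : ℝ) * ε ^ 2))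
      ≤ ∑ σ ∈ univ.filter E,
          Real.exp (s * ((∑ i : Fin T, (if c (σ i) then (1:ℝ) else 0)) - T * p)) := by
    rw [← nsmul_eq_mul]
    apply Finset.card_nsmul_le_sum
    intro σ hσ
    exact Real.exp_le_exp.2 (hE σ (Finset.mem_filter.1 hσ).2)
  have step2 : ∑ σ ∈ univ.filter E,
        Real.exp (s * ((∑ i : Fin T, (if c (σ i) then (1:ℝ) else 0)) - T * p))
      ≤ ∑ σ : Fin T → Fin m,
        Real.exp (s * ((∑ i : Fin T, (if c (σ i) then (1:ℝ) else 0)) - T * p)) :=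
    Finset.sum_le_sum_of_subset_of_nonneg (Finset.filter_subset _ _)
      (fun _ _ _ => (Real.exp_pos _).le)
  have step3 := chernoff_sum_exp m T hm c s
  have key : ((univ.filter E).card : ℝ) * Real.exp (4 * ((T : ℝ) * ε ^ 2))
      ≤ (m : ℝ) ^ T * Real.exp ((T : ℝ) * (2 * ε ^ 2)) := by
    refine (step1.trans (step2.trans (step3.trans_eq ?_)))
    congr 2
    rw [hs]; ring
  have hexp : (0:ℝ) < Real.exp (4 * ((T : ℝ) * ε ^ 2)) := Real.exp_pos _
  rw [← le_div_iff₀ hexp] at key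
  refine key.trans_eq ?_
  rw [mul_div_assoc, ← Real.exp_sub]
  congr 1
  ring

lemma length_filter_eq {C : Type*} (l : List C) (P : C → Bool) :
    (l.filter P).length = (Finset.univ.filter (fun j : Fin l.length => P (l.get j) = true)).card := by
  conv_lhs => rw [← List.ofFn_get l]
  rw [List.ofFn_eq_map, List.filter_map, List.length_map, Fin.univ_def]
  rw [Finset.filter_congr_decidable]
  simp [Finset.filter, Finset.card]
  congr 1

lemma abs_ciSup_sub_ciSup {ι : Type*} [Fintype ι] [Nonempty ι] (u v : ι → ℝ) (ε : ℝ)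
    (h : ∀ x, |u x - v x| ≤ ε) : |(⨆ x, u x) - ⨆ x, v x| ≤ ε := by
  have hu : BddAbove (Set.range u) := (Set.finite_range u).bddAbove
  have hv : BddAbove (Set.range v) := (Set.finite_range v).bddAbove
  rw [abs_le]
  constructor
  · have : (⨆ x, v x) ≤ (⨆ x, u x) + ε :=
      ciSup_le fun x => by
        have := (abs_le.1 (h x)).1
        have hx := le_ciSup hu x
        linarith
    linarith
  · have : (⨆ x, u x) ≤ (⨆ x, v x) + ε :=
      ciSup_le fun x => by
        have := (abs_le.1 (h x)).2
        have hx := le_ciSup hv x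
        linarith
    linarith

set_option maxHeartbeats 2000000 in
open Finset in
/-- If `T ≥ (n + ln 2 + ln(1/δ)) / (2ε²)` and `Φ'` consists of `T`
constraints sampled i.i.d. uniformly from `Φ` (a sample is a uniform function
`σ : Fin T → Fin Φ.length`), then with probability at least `1 − δ` the values
`val_{Φ'}(x)` and `val_Φ(x)` are `ε`-close simultaneously for all `x ∈ {0,1}^n`;
consequently `|maxval(Φ') − maxval(Φ)| ≤ ε` with probability at least `1 − δ`. -/
theorem subsample_uniform_concentration {C : Type*} (n T : ℕ)
    (Φ : List C) (hΦ : Φ ≠ []) (sat : C → (Fin n → Bool) → Bool)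
    (ε δ : ℝ) (hε : 0 < ε) (hε1 : ε < 1) (hδ : 0 < δ) (hδ1 : δ < 1)
    (hT : ((n : ℝ) + Real.log 2 + Real.log (1 / δ)) / (2 * ε ^ 2) ≤ (T : ℝ)) :
    (1 - δ ≤
      ((Finset.univ.filter (fun σ : Fin T → Fin Φ.length =>
          ∀ x : Fin n → Bool,
            |((Finset.univ.filter (fun i : Fin T => sat (Φ.get (σ i)) x)).card : ℝ) / T
              - ((Φ.filter (fun c => sat c x)).length : ℝ) / (Φ.length : ℝ)| ≤ ε)).card : ℝ)
        / (Φ.length : ℝ) ^ T) ∧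
    (1 - δ ≤
      ((Finset.univ.filter (fun σ : Fin T → Fin Φ.length =>
          |(⨆ x : Fin n → Bool,
              ((Finset.univ.filter (fun i : Fin T => sat (Φ.get (σ i)) x)).card : ℝ) / T)
            - (⨆ x : Fin n → Bool,
              ((Φ.filter (fun c => sat c x)).length : ℝ) / (Φ.length : ℝ))| ≤ ε)).card : ℝ)
        / (Φ.length : ℝ) ^ T) := by
  set m := Φ.length with hmdef
  have hm : 0 < m := List.length_pos_iff.2 hΦ
  have hmR : (0:ℝ) < m := by exact_mod_cast hm
  -- numerator positivity and T bound
  have hlog2 : (0:ℝ) < Real.log 2 := Real.log_pos (by norm_num)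
  have hlogδ : (0:ℝ) < Real.log (1 / δ) :=
    Real.log_pos (by rw [lt_div_iff₀ hδ]; linarith)
  have hnum : (0:ℝ) < (n : ℝ) + Real.log 2 + Real.log (1 / δ) := by positivity
  have hden : (0:ℝ) < 2 * ε ^ 2 := by positivity
  have hTbound : (n : ℝ) + Real.log 2 + Real.log (1 / δ) ≤ 2 * ε ^ 2 * T := by
    rw [div_le_iff₀ hden] at hT; linarith
  have hTpos : 0 < T := by
    by_contra h
    push_neg at h
    interval_cases T
    simp at hTbound
    have hld : Real.log δ < 0 := Real.log_neg hδ hδ1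
    have hn0 : (0:ℝ) ≤ (n:ℝ) := Nat.cast_nonneg n
    linarith
  have hTR : (0:ℝ) < T := by exact_mod_cast hTpos
  -- notation
  set c : (Fin n → Bool) → Fin m → Bool := fun x j => sat (Φ.get j) x with hc
  set p : (Fin n → Bool) → ℝ :=
    fun x => ((univ.filter (fun j : Fin m => c x j = true)).card : ℝ) / m with hpdef
  set S : (Fin T → Fin m) → (Fin n → Bool) → ℝ :=
    fun σ x => ((univ.filter (fun i : Fin T => sat (Φ.get (σ i)) x)).card : ℝ) with hS
  have hSsum : ∀ σ x, S σ x = ∑ i : Fin T, (if c x (σ i) then (1:ℝ) else 0) := by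
    intro σ x
    have h0 : S σ x = ((univ.filter (fun i : Fin T => sat (Φ.get (σ i)) x = true)).card : ℝ) := rfl
    rw [h0, Finset.card_filter]
    push_cast
    rfl
  have hplen : ∀ x, ((Φ.filter (fun c => sat c x)).length : ℝ) / (m : ℝ) = p x := by
    intro x
    rw [hpdef]
    congr 2
    exact_mod_cast length_filter_eq Φ (fun c => sat c x)
  -- the good event
  set P : (Fin T → Fin m) → Prop := fun σ =>
    ∀ x : Fin n → Bool, |S σ x / T - p x| ≤ ε with hP
  -- bad count bound
  have hbadx : ∀ x : Fin n → Bool,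
      ((univ.filter (fun σ : Fin T → Fin m => ¬ |S σ x / T - p x| ≤ ε)).card : ℝ)
        ≤ 2 * ((m : ℝ) ^ T * Real.exp (-(2 * T * ε ^ 2))) := by
    intro x
    set Eu : (Fin T → Fin m) → Prop := fun σ =>
      4 * ((T : ℝ) * ε ^ 2) ≤ (4 * ε) * ((∑ i : Fin T, (if c x (σ i) then (1:ℝ) else 0))
        - T * p x) with hEu
    set El : (Fin T → Fin m) → Prop := fun σ =>
      4 * ((T : ℝ) * ε ^ 2) ≤ (-(4 * ε)) * ((∑ i : Fin T, (if c x (σ i) then (1:ℝ) else 0))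
        - T * p x) with hEl
    have hsub : univ.filter (fun σ : Fin T → Fin m => ¬ |S σ x / T - p x| ≤ ε)
        ⊆ univ.filter Eu ∪ univ.filter El := by
      intro σ hσ
      rw [Finset.mem_filter] at hσ
      have hσ' := hσ.2
      rw [← Finset.filter_or, Finset.mem_filter]
      refine ⟨Finset.mem_univ _, ?_⟩
      have h' : ε < |S σ x / T - p x| := not_le.1 hσ'
      have hcancel : S σ x / T * T = S σ x := div_mul_cancel₀ (S σ x) hTR.ne'
      rcases lt_abs.1 h' with h | h
      · refine Or.inl ?_
        show 4 * ((T : ℝ) * ε ^ 2) ≤ (4 * ε) * ((∑ i : Fin T, (if c x (σ i) then (1:ℝ) else 0))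
          - T * p x)
        rw [← hSsum σ x]
        nlinarith [mul_lt_mul_of_pos_right h hTR, mul_pos hε hTR]
      · refine Or.inr ?_
        show 4 * ((T : ℝ) * ε ^ 2) ≤ (-(4 * ε)) * ((∑ i : Fin T, (if c x (σ i) then (1:ℝ) else 0))
          - T * p x)
        rw [← hSsum σ x]
        nlinarith [mul_lt_mul_of_pos_right h hTR, mul_pos hε hTR]
    have hu := chernoff_tail m T hm (c x) ε (4 * ε) (by ring) Eu (fun σ h => h)
    have hl := chernoff_tail m T hm (c x) ε (-(4 * ε)) (by ring) El (fun σ h => h)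
    calc ((univ.filter (fun σ : Fin T → Fin m => ¬ |S σ x / T - p x| ≤ ε)).card : ℝ)
        ≤ ((univ.filter Eu ∪ univ.filter El).card : ℝ) := by
          exact_mod_cast Finset.card_le_card hsub
      _ ≤ ((univ.filter Eu).card : ℝ) + ((univ.filter El).card : ℝ) := by
          exact_mod_cast Finset.card_union_le _ _
      _ ≤ 2 * ((m : ℝ) ^ T * Real.exp (-(2 * T * ε ^ 2))) := by linarith
  have hbad : ((univ.filter (fun σ : Fin T → Fin m => ¬ P σ)).card : ℝ)
      ≤ δ * (m : ℝ) ^ T := by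
    have hsub : univ.filter (fun σ : Fin T → Fin m => ¬ P σ)
        ⊆ Finset.biUnion univ (fun x : Fin n → Bool =>
            univ.filter (fun σ : Fin T → Fin m => ¬ |S σ x / T - p x| ≤ ε)) := by
      intro σ hσ
      rw [Finset.mem_filter] at hσ
      have hσ2 := hσ.2
      rw [hP] at hσ2
      obtain ⟨x, hx⟩ := not_forall.1 hσ2
      rw [not_le] at hx
      exact Finset.mem_biUnion.2 ⟨x, Finset.mem_univ _, Finset.mem_filter.2
        ⟨Finset.mem_univ _, not_le.2 hx⟩⟩
    have h1 : ((univ.filter (fun σ : Fin T → Fin m => ¬ P σ)).card : ℝ)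
        ≤ ∑ x : Fin n → Bool,
            ((univ.filter (fun σ : Fin T → Fin m => ¬ |S σ x / T - p x| ≤ ε)).card : ℝ) := by
      calc ((univ.filter (fun σ : Fin T → Fin m => ¬ P σ)).card : ℝ)
          ≤ ((Finset.biUnion univ (fun x : Fin n → Bool =>
              univ.filter (fun σ : Fin T → Fin m => ¬ |S σ x / T - p x| ≤ ε))).card : ℝ) := by
            exact_mod_cast Finset.card_le_card hsub
        _ ≤ _ := by exact_mod_cast Finset.card_biUnion_le
    have h2 : ∑ x : Fin n → Bool,
          ((univ.filter (fun σ : Fin T → Fin m => ¬ |S σ x / T - p x| ≤ ε)).card : ℝ)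
        ≤ (2:ℝ) ^ n * (2 * ((m : ℝ) ^ T * Real.exp (-(2 * T * ε ^ 2)))) := by
      calc _ ≤ ∑ _x : Fin n → Bool, 2 * ((m : ℝ) ^ T * Real.exp (-(2 * T * ε ^ 2))) :=
            Finset.sum_le_sum fun x _ => hbadx x
        _ = (2:ℝ) ^ n * (2 * ((m : ℝ) ^ T * Real.exp (-(2 * T * ε ^ 2)))) := by
            rw [Finset.sum_const, Finset.card_univ, nsmul_eq_mul]
            norm_num
    have h3 : (2:ℝ) ^ n * (2 * ((m : ℝ) ^ T * Real.exp (-(2 * T * ε ^ 2))))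
        ≤ δ * (m : ℝ) ^ T := by
      have key : (2:ℝ) ^ (n + 1) * Real.exp (-(2 * T * ε ^ 2)) ≤ δ := by
        have hlog2le : Real.log 2 ≤ 1 := by
          have := Real.log_two_lt_d9; linarith
        have hδlog : Real.log (1 / δ) = - Real.log δ := by
          rw [Real.log_div one_ne_zero hδ.ne', Real.log_one]; ring
        have hexp : ((n:ℝ) + 1) * Real.log 2 - 2 * T * ε ^ 2 ≤ Real.log δ := by
          rw [hδlog] at hTbound
          have hn : (n:ℝ) * Real.log 2 ≤ n := by
            calc (n:ℝ) * Real.log 2 ≤ n * 1 :=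
              mul_le_mul_of_nonneg_left hlog2le (Nat.cast_nonneg n)
            _ = n := mul_one _
          nlinarith
        have h2exp : (2:ℝ) ^ (n + 1) = Real.exp (((n:ℝ) + 1) * Real.log 2) := by
          rw [← Real.exp_log (show (0:ℝ) < (2:ℝ) ^ (n + 1) by positivity)]
          congr 1
          rw [Real.log_pow]
          push_cast
          ring
        calc (2:ℝ) ^ (n + 1) * Real.exp (-(2 * T * ε ^ 2))
            = Real.exp (((n:ℝ) + 1) * Real.log 2 - 2 * T * ε ^ 2) := by
              rw [h2exp, ← Real.exp_add, sub_eq_add_neg]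
          _ ≤ Real.exp (Real.log δ) := Real.exp_le_exp.2 hexp
          _ = δ := Real.exp_log hδ
      calc (2:ℝ) ^ n * (2 * ((m : ℝ) ^ T * Real.exp (-(2 * T * ε ^ 2))))
          = ((2:ℝ) ^ (n+1) * Real.exp (-(2 * T * ε ^ 2))) * (m : ℝ) ^ T := by ring
        _ ≤ δ * (m : ℝ) ^ T := by
            apply mul_le_mul_of_nonneg_right key (by positivity)
    linarith
  -- good count lower bound
  have hgood : (1 - δ) * (m : ℝ) ^ T ≤ ((univ.filter P).card : ℝ) := by
    have hsplit := Finset.card_filter_add_card_filter_not (s := univ) (p := P)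
    have hcardu : (Finset.univ : Finset (Fin T → Fin m)).card = m ^ T := by
      rw [Finset.card_univ]
      simp [Fintype.card_fun]
    have hnat : (univ.filter P).card + (univ.filter (fun σ => ¬ P σ)).card = m ^ T := by
      rw [hsplit, hcardu]
    have : ((univ.filter P).card : ℝ)
        + ((univ.filter (fun σ => ¬ P σ)).card : ℝ) = (m : ℝ) ^ T := by
      exact_mod_cast congrArg (Nat.cast : ℕ → ℝ) hnat
    nlinarith
  have hdiv : 1 - δ ≤ ((univ.filter P).card : ℝ) / (m : ℝ) ^ T := by
    rw [le_div_iff₀ (by positivity)]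
    linarith
  have hplen' : ∀ x : Fin n → Bool,
      ((Φ.filter (fun c => sat c x)).length : ℝ) / (m : ℝ) = p x := hplen
  simp only [hmdef] at hplen'
  constructor
  · simp only [hplen']
    exact hdiv
  · -- second part: the good event implies the sup event
    have hmono : univ.filter P ⊆ univ.filter (fun σ : Fin T → Fin m =>
        |(⨆ x : Fin n → Bool, S σ x / T) - ⨆ x : Fin n → Bool, p x| ≤ ε) := by
      exact Finset.monotone_filter_right univ
        (fun σ _ hσ => abs_ciSup_sub_ciSup _ _ ε hσ)
    have : ((univ.filter P).card : ℝ) ≤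
        ((univ.filter (fun σ : Fin T → Fin m =>
          |(⨆ x : Fin n → Bool, S σ x / T) - ⨆ x : Fin n → Bool, p x| ≤ ε)).card : ℝ) := by
      exact_mod_cast Finset.card_le_card hmono
    simp only [hplen']
    calc (1:ℝ) - δ ≤ ((univ.filter P).card : ℝ) / (m : ℝ) ^ T := hdiv
      _ ≤ _ := by gcongr
end

section
/- The Goemans–Williamson constant expression is well-defined and exceeds 0.878: specifically, (2/π)·sup_{0 < θ ≤ π} θ/(1 − cos θ) is attained in (0, π) and its value is greater than 0.878. -/
open Real Set

lemma sin_ge_sub_cube6 {x : ℝ} (hx : 0 ≤ x) : x - x ^ 3 / 6 ≤ Real.sin x := by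
  set g : ℝ → ℝ := fun t => Real.sin t - t + t ^ 3 / 6 with hg
  have hd : ∀ t : ℝ, HasDerivAt g (Real.cos t - 1 + t ^ 2 / 2) t := by
    intro t
    have h1 := (Real.hasDerivAt_sin t).sub (hasDerivAt_id t)
    have h2 := ((hasDerivAt_pow 3 t).div_const 6)
    have := h1.add h2
    refine this.congr_deriv ?_
    push_cast; ring
  have hmono : MonotoneOn g (Set.Ici (0 : ℝ)) := by
    apply monotoneOn_of_deriv_nonneg (convex_Ici 0)
    · exact (Continuous.continuousOn (by continuity))
    · exact fun t _ => (hd t).differentiableAt.differentiableWithinAt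
    · intro t _
      rw [(hd t).deriv]
      have := Real.one_sub_sq_div_two_le_cos (x := t)
      linarith
  have h0 : g 0 = 0 := by simp [hg]
  have := hmono (Set.self_mem_Ici) (Set.mem_Ici.2 hx) hx
  rw [h0] at this
  simp only [hg] at this
  linarith

lemma cos_le_quartic {x : ℝ} (hx : 0 ≤ x) : Real.cos x ≤ 1 - x ^ 2 / 2 + x ^ 4 / 24 := by
  set g : ℝ → ℝ := fun t => 1 - t ^ 2 / 2 + t ^ 4 / 24 - Real.cos t with hg
  have hd : ∀ t : ℝ, HasDerivAt g (-(t) + t ^ 3 / 6 - (-Real.sin t)) t := by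
    intro t
    have h1 := ((hasDerivAt_pow 2 t).div_const 2)
    have h2 := ((hasDerivAt_pow 4 t).div_const 24)
    have h3 := (Real.hasDerivAt_cos t)
    have := (((hasDerivAt_const t (1:ℝ)).sub h1).add h2).sub h3
    refine this.congr_deriv ?_
    push_cast; ring
  have hmono : MonotoneOn g (Set.Ici (0 : ℝ)) := by
    apply monotoneOn_of_deriv_nonneg (convex_Ici 0)
    · exact (Continuous.continuousOn (by continuity))
    · exact fun t _ => (hd t).differentiableAt.differentiableWithinAt
    · intro t ht
      rw [(hd t).deriv]
      have ht0 : (0:ℝ) ≤ t := le_of_lt (by simpa using ht)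
      have := sin_ge_sub_cube6 ht0
      linarith
  have h0 : g 0 = 0 := by simp [hg]
  have := hmono (Set.self_mem_Ici) (Set.mem_Ici.2 hx) hx
  rw [h0] at this
  simp only [hg] at this
  linarith

-- key inequality: 0.439 π (1 - cos θ) < θ on (0, π]
lemma gw_key {θ : ℝ} (h1 : 0 < θ) (h2 : θ ≤ π) : 0.439 * π * (1 - Real.cos θ) < θ := by
  have hπl : (3.141592 : ℝ) < π := Real.pi_gt_d6
  have hπu : π < 3.141593 := Real.pi_lt_d6
  set u : ℝ := π - θ with hu
  have hu0 : 0 ≤ u := by simp [hu]; linarith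
  have hcosθ : Real.cos θ = -Real.cos u := by
    rw [hu, Real.cos_pi_sub]; ring
  by_cases hcase : u ≤ 1.75
  · -- quartic bound
    have hc := cos_le_quartic hu0
    have hu2 : u ^ 2 ≤ 3.0625 := by nlinarith
    have hu4 : u ^ 4 ≤ 3.0625 * u ^ 2 := by nlinarith [sq_nonneg u, mul_le_mul_of_nonneg_left hu2 (sq_nonneg u)]
    have hQ : 0 < 0.122 + 0.2195 * u ^ 2 - 0.439 * u ^ 4 / 24 := by nlinarith [sq_nonneg u]
    have hq : u < 3.141592 * (0.122 + 0.2195 * u ^ 2 - 0.439 * u ^ 4 / 24) := by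
      nlinarith [sq_nonneg (u - 0.8156), sq_nonneg (u^2 - 0.665), mul_nonneg hu0 (sq_nonneg (u - 0.8156)), mul_nonneg (sub_nonneg.2 hcase) (sq_nonneg (u - 0.8156)), sq_nonneg (u^2 + u - 1.4)]
    have hπQ : u < π * (0.122 + 0.2195 * u ^ 2 - 0.439 * u ^ 4 / 24) := by
      calc u < 3.141592 * (0.122 + 0.2195 * u ^ 2 - 0.439 * u ^ 4 / 24) := hq
      _ ≤ π * (0.122 + 0.2195 * u ^ 2 - 0.439 * u ^ 4 / 24) := by
          apply mul_le_mul_of_nonneg_right (le_of_lt hπl) (le_of_lt hQ)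
    rw [hcosθ]
    have hθeq : θ = π - u := by rw [hu]; ring
    rw [hθeq]
    nlinarith [Real.pi_pos, mul_le_mul_of_nonneg_left hc (by norm_num [Real.pi_pos.le] : (0:ℝ) ≤ 0.439 * π), hπQ]
  · -- small θ case
    push_neg at hcase
    have hθs : θ < 1.391593 := by rw [hu] at hcase; linarith
    have hcos := Real.one_sub_sq_div_two_le_cos (x := θ)
    nlinarith [Real.pi_pos, sq_nonneg θ, mul_pos h1 h1]

/-- The Goemans–Williamson constant
`min_{0 < θ ≤ π} (2/π)·θ/(1 − cos θ)` is attained at some `θ₀ ∈ (0, π)` and its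
value exceeds `0.878`. -/
theorem goemans_williamson_constant :
    ∃ θ₀ ∈ Set.Ioo (0 : ℝ) Real.pi,
      (∀ θ ∈ Set.Ioc (0 : ℝ) Real.pi,
        (2 / Real.pi) * θ₀ / (1 - Real.cos θ₀) ≤ (2 / Real.pi) * θ / (1 - Real.cos θ)) ∧
      0.878 < (2 / Real.pi) * θ₀ / (1 - Real.cos θ₀) := by
  have hπl : (3.141592 : ℝ) < π := Real.pi_gt_d6
  have hπu : π < 3.141593 := Real.pi_lt_d6
  have hπ0 : (0:ℝ) < π := Real.pi_pos
  set f : ℝ → ℝ := fun θ => (2 / π) * θ / (1 - Real.cos θ) with hf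
  -- denominator positive on (0, π]
  have hden : ∀ θ : ℝ, 0 < θ → θ ≤ π → 0 < 1 - Real.cos θ := by
    intro θ h1 h2
    have : Real.cos θ < Real.cos 0 := Real.cos_lt_cos_of_nonneg_of_le_pi le_rfl h2 h1
    simpa using this
  -- key bound rephrased
  have hkey : ∀ θ : ℝ, 0 < θ → θ ≤ π → 0.878 < f θ := by
    intro θ h1 h2
    have hd := hden θ h1 h2
    rw [hf]
    simp only
    rw [lt_div_iff₀ hd, div_mul_eq_mul_div, lt_div_iff₀ hπ0]
    have := gw_key h1 h2
    nlinarith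
  -- compact minimum on [1, π]
  have h1π : (1:ℝ) ≤ π := by linarith
  have hcont : ContinuousOn f (Set.Icc 1 π) := by
    apply ContinuousOn.div
    · exact (Continuous.continuousOn (by continuity))
    · exact (Continuous.continuousOn (by continuity))
    · intro x hx
      exact ne_of_gt (hden x (lt_of_lt_of_le one_pos hx.1) hx.2)
  obtain ⟨θ₀, hθ₀K, hmin⟩ := (isCompact_Icc).exists_isMinOn ⟨1, Set.left_mem_Icc.2 h1π⟩ hcont
  have hmin' : ∀ y ∈ Set.Icc (1:ℝ) π, f θ₀ ≤ f y := fun y hy => hmin hy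
  have hθ₀1 : 1 ≤ θ₀ := hθ₀K.1
  have hθ₀π : θ₀ ≤ π := hθ₀K.2
  -- f π = 1
  have hfπ : f π = 1 := by
    rw [hf]; simp [Real.cos_pi]
    field_simp
    norm_num
  -- f 2.3 < 1
  have hf23 : f 2.3 < 1 := by
    have h23π : (2.3:ℝ) ≤ π := by linarith
    have hd := hden 2.3 (by norm_num) h23π
    rw [hf]
    simp only
    rw [div_lt_one hd]
    have hcv : Real.cos (π - 2.3) ≥ 1 - (π - 2.3) ^ 2 / 2 := Real.one_sub_sq_div_two_le_cos
    have hc23 : Real.cos 2.3 = -Real.cos (π - 2.3) := by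
      rw [← Real.cos_pi_sub (π - 2.3)]; ring_nf
    rw [hc23]
    rw [div_mul_eq_mul_div, div_lt_iff₀ hπ0] at *
    nlinarith [sq_nonneg (π - 2.3)]
  have hθ₀ltπ : θ₀ < π := by
    rcases lt_or_eq_of_le hθ₀π with h | h
    · exact h
    · exfalso
      have h23 : (2.3:ℝ) ∈ Set.Icc (1:ℝ) π := ⟨by norm_num, by linarith⟩
      have := hmin' 2.3 h23
      rw [h, hfπ] at this
      linarith
  refine ⟨θ₀, ⟨by linarith, hθ₀ltπ⟩, ?_, hkey θ₀ (by linarith) hθ₀π⟩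
  intro θ hθ
  rcases le_or_gt 1 θ with hθ1 | hθ1
  · exact hmin' θ ⟨hθ1, hθ.2⟩
  · -- θ ∈ (0,1): f θ > 1 ≥ f θ₀
    have hθ0 := hθ.1
    have hd := hden θ hθ0 hθ.2
    have hfθ : 1 < f θ := by
      rw [hf]
      simp only
      rw [lt_div_iff₀ hd, div_mul_eq_mul_div, lt_div_iff₀ hπ0]
      have hcos := Real.one_sub_sq_div_two_le_cos (x := θ)
      nlinarith
    have : f θ₀ ≤ 1 := by
      have := hmin' π (Set.right_mem_Icc.2 h1π)
      rw [hfπ] at this; exact this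
    calc f θ₀ ≤ 1 := this
    _ ≤ f θ := le_of_lt hfθ
end
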